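/- Let p < q be primes, let α, β be positive integers, let ε be a natural number with β > ε, set n = p^α·q^β and m = p^{α+ε}·q^{β−ε}, and let u ≥ 2 be an integer with gcd(m, u) = 1 and gcd(n, u) = 1. Then D(n·u‖m·u) ≤ D(n‖m). -/

import Mathlib

/-- `Ω(n)`: number of prime factors of `n` counted with multiplicity. -/
def bigOmega (n : ℕ) : ℕ := n.primeFactorsList.length

/-- The Kullback–Leibler divergence of two positive integers
`a = q_1^{a_1} ⋯ q_r^{a_r}` and `b = q'_1^{b_1} ⋯ q'_r^{b_r}` (primes listed in
ascending order): `D(a‖b) = log(Ω(b)/Ω(a)) − (1/Ω(a)) ∑_i a_i log (b_i/a_i)`. -/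
noncomputable def numDivergence (a b : ℕ) : ℝ :=
  Real.log ((bigOmega b : ℝ) / (bigOmega a : ℝ)) -
    (1 / (bigOmega a : ℝ)) *
      ∑ i ∈ Finset.range a.primeFactors.card,
        (a.factorization ((a.primeFactors.sort (· ≤ ·)).getD i 1) : ℝ) *
          Real.log ((b.factorization ((b.primeFactors.sort (· ≤ ·)).getD i 1) : ℝ) /
            (a.factorization ((a.primeFactors.sort (· ≤ ·)).getD i 1) : ℝ))

open ArithmeticFunction
open scoped ArithmeticFunction.Omega

lemma sum_range_getD (l : List ℕ) (f : ℕ → ℝ) :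
    ∑ i ∈ Finset.range l.length, f (l.getD i 1) = (l.map f).sum := by
  induction l with
  | nil => simp
  | cons a l ih =>
    rw [List.length_cons, Finset.sum_range_succ']
    simp only [List.getD_cons_succ, List.getD_cons_zero, List.map_cons, List.sum_cons, ih]
    ring

lemma sum_sort_getD (s : Finset ℕ) (f : ℕ → ℝ) :
    ∑ i ∈ Finset.range s.card, f ((s.sort (· ≤ ·)).getD i 1) = ∑ r ∈ s, f r := by
  rw [← Finset.length_sort (α := ℕ) (· ≤ ·) (s := s), sum_range_getD,
    Finset.sum_eq_multiset_sum, ← Finset.sort_eq s (· ≤ ·), Multiset.map_coe, Multiset.sum_coe]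

lemma bigOmega_eq (n : ℕ) : bigOmega n = Ω n := rfl

lemma numDivergence_eq (a b : ℕ) (h : a.primeFactors = b.primeFactors) :
    numDivergence a b =
      Real.log ((bigOmega b : ℝ) / (bigOmega a : ℝ)) -
        (1 / (bigOmega a : ℝ)) *
          ∑ r ∈ a.primeFactors,
            (a.factorization r : ℝ) *
              Real.log ((b.factorization r : ℝ) / (a.factorization r : ℝ)) := by
  unfold numDivergence
  rw [← h]
  congr 1
  congr 1
  exact sum_sort_getD a.primeFactors (fun r => (a.factorization r : ℝ) * Real.log ((b.factorization r : ℝ) / (a.factorization r : ℝ)))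

theorem divergence_mul_coprime_le (p q α β ε : ℕ) (hp : p.Prime) (hq : q.Prime)
    (hpq : p < q) (hα : 0 < α) (hβ : 0 < β) (hε : ε < β)
    (n m : ℕ) (hn : n = p ^ α * q ^ β) (hm : m = p ^ (α + ε) * q ^ (β - ε))
    (u : ℕ) (hu : 2 ≤ u) (hmu : Nat.gcd m u = 1) (hnu : Nat.gcd n u = 1) :
    numDivergence (n * u) (m * u) ≤ numDivergence n m := by
  have hpq' : p ≠ q := hpq.ne
  have hu0 : u ≠ 0 := by omega
  have hpα : p ^ α ≠ 0 := pow_ne_zero _ hp.pos.ne'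
  have hqβ : q ^ β ≠ 0 := pow_ne_zero _ hq.pos.ne'
  have hpαε : p ^ (α + ε) ≠ 0 := pow_ne_zero _ hp.pos.ne'
  have hqβε : q ^ (β - ε) ≠ 0 := pow_ne_zero _ hq.pos.ne'
  have hn0 : n ≠ 0 := by rw [hn]; positivity
  have hm0 : m ≠ 0 := by rw [hm]; positivity
  -- prime factors
  have hpfn : n.primeFactors = {p, q} := by
    rw [hn, Nat.primeFactors_mul hpα hqβ, Nat.primeFactors_pow _ hα.ne',
      Nat.primeFactors_pow _ hβ.ne', hp.primeFactors, hq.primeFactors]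
    rfl
  have hpfm : m.primeFactors = {p, q} := by
    rw [hm, Nat.primeFactors_mul hpαε hqβε, Nat.primeFactors_pow _ (by omega),
      Nat.primeFactors_pow _ (by omega), hp.primeFactors, hq.primeFactors]
    rfl
  have hpfnu : (n * u).primeFactors = {p, q} ∪ u.primeFactors := by
    rw [Nat.primeFactors_mul hn0 hu0, hpfn]
  have hpfmu : (m * u).primeFactors = {p, q} ∪ u.primeFactors := by
    rw [Nat.primeFactors_mul hm0 hu0, hpfm]
  -- coprimality : primes of u don't divide n, m and vice versa
  have hndvd : ∀ r ∈ u.primeFactors, ¬ r ∣ n := by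
    intro r hr hdvd
    have hru : r ∣ u := Nat.dvd_of_mem_primeFactors hr
    have : r ∣ Nat.gcd n u := Nat.dvd_gcd hdvd hru
    rw [hnu] at this
    exact (Nat.prime_of_mem_primeFactors hr).one_lt.ne' (Nat.dvd_one.mp this)
  have hmdvd : ∀ r ∈ u.primeFactors, ¬ r ∣ m := by
    intro r hr hdvd
    have hru : r ∣ u := Nat.dvd_of_mem_primeFactors hr
    have : r ∣ Nat.gcd m u := Nat.dvd_gcd hdvd hru
    rw [hmu] at this
    exact (Nat.prime_of_mem_primeFactors hr).one_lt.ne' (Nat.dvd_one.mp this)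
  have hpu : ¬ p ∣ u := by
    intro h
    have hpn : p ∣ n := by rw [hn]; exact dvd_mul_of_dvd_left (dvd_pow_self p hα.ne') _
    have : p ∣ Nat.gcd n u := Nat.dvd_gcd hpn h
    rw [hnu] at this
    exact hp.one_lt.ne' (Nat.dvd_one.mp this)
  have hqu : ¬ q ∣ u := by
    intro h
    have hqn : q ∣ n := by rw [hn]; exact dvd_mul_of_dvd_right (dvd_pow_self q hβ.ne') _
    have : q ∣ Nat.gcd n u := Nat.dvd_gcd hqn h
    rw [hnu] at this
    exact hq.one_lt.ne' (Nat.dvd_one.mp this)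
  have hdisj : Disjoint ({p, q} : Finset ℕ) u.primeFactors := by
    simp only [Finset.disjoint_insert_left, Finset.disjoint_singleton_left]
    constructor
    · intro h; exact hpu (Nat.dvd_of_mem_primeFactors h)
    · intro h; exact hqu (Nat.dvd_of_mem_primeFactors h)
  -- factorizations
  have hfn : n.factorization = Finsupp.single p α + Finsupp.single q β := by
    rw [hn, Nat.factorization_mul hpα hqβ, hp.factorization_pow, hq.factorization_pow]
  have hfm : m.factorization = Finsupp.single p (α + ε) + Finsupp.single q (β - ε) := by
    rw [hm, Nat.factorization_mul hpαε hqβε, hp.factorization_pow, hq.factorization_pow]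
  have hfnu : (n * u).factorization = n.factorization + u.factorization :=
    Nat.factorization_mul hn0 hu0
  have hfmu : (m * u).factorization = m.factorization + u.factorization :=
    Nat.factorization_mul hm0 hu0
  have hup : u.factorization p = 0 := Nat.factorization_eq_zero_of_not_dvd hpu
  have huq : u.factorization q = 0 := Nat.factorization_eq_zero_of_not_dvd hqu
  have hnp : n.factorization p = α := by simp [hfn, Finsupp.single_apply, hpq', hpq'.symm]
  have hnq : n.factorization q = β := by simp [hfn, Finsupp.single_apply, hpq', hpq'.symm]
  have hmp : m.factorization p = α + ε := by simp [hfm, Finsupp.single_apply, hpq', hpq'.symm]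
  have hmq : m.factorization q = β - ε := by simp [hfm, Finsupp.single_apply, hpq', hpq'.symm]
  -- Omegas
  have hΩn : Ω n = α + β := by
    rw [hn, cardFactors_mul hpα hqβ, cardFactors_apply_prime_pow hp,
      cardFactors_apply_prime_pow hq]
  have hΩm : Ω m = α + β := by
    rw [hm, cardFactors_mul hpαε hqβε, cardFactors_apply_prime_pow hp,
      cardFactors_apply_prime_pow hq]
    omega
  have hΩnu : Ω (n * u) = α + β + Ω u := by rw [cardFactors_mul hn0 hu0, hΩn]
  have hΩmu : Ω (m * u) = α + β + Ω u := by rw [cardFactors_mul hm0 hu0, hΩm]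
  -- rewrite divergences
  rw [numDivergence_eq n m (by rw [hpfn, hpfm]),
    numDivergence_eq (n * u) (m * u) (by rw [hpfnu, hpfmu])]
  simp only [bigOmega_eq, hΩn, hΩm, hΩnu, hΩmu]
  rw [div_self (by positivity : ((α + β + Ω u : ℕ) : ℝ) ≠ 0),
    div_self (by positivity : ((α + β : ℕ) : ℝ) ≠ 0), Real.log_one]
  -- compute the sums
  set S : ℝ := (α : ℝ) * Real.log (((α + ε : ℕ) : ℝ) / (α : ℝ)) +
      (β : ℝ) * Real.log (((β - ε : ℕ) : ℝ) / (β : ℝ)) with hS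
  have hsum1 : ∑ r ∈ n.primeFactors,
      (n.factorization r : ℝ) *
        Real.log ((m.factorization r : ℝ) / (n.factorization r : ℝ)) = S := by
    rw [hpfn, Finset.sum_insert (by simp [hpq']), Finset.sum_singleton, hnp, hnq, hmp, hmq, hS]
  have hsum2 : ∑ r ∈ (n * u).primeFactors,
      ((n * u).factorization r : ℝ) *
        Real.log (((m * u).factorization r : ℝ) / ((n * u).factorization r : ℝ)) = S := by
    rw [hpfnu, Finset.sum_union hdisj]
    have h1 : ∑ r ∈ ({p, q} : Finset ℕ),
        ((n * u).factorization r : ℝ) *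
          Real.log (((m * u).factorization r : ℝ) / ((n * u).factorization r : ℝ)) = S := by
      rw [Finset.sum_insert (by simp [hpq']), Finset.sum_singleton, hfnu, hfmu]
      simp only [Finsupp.add_apply, hnp, hnq, hmp, hmq, hup, huq, add_zero]
      exact hS.symm
    have h2 : ∑ r ∈ u.primeFactors,
        ((n * u).factorization r : ℝ) *
          Real.log (((m * u).factorization r : ℝ) / ((n * u).factorization r : ℝ)) = 0 := by
      apply Finset.sum_eq_zero
      intro r hr
      have h3 : n.factorization r = 0 :=
        Nat.factorization_eq_zero_of_not_dvd (fun h => hndvd r hr h)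
      have h4 : m.factorization r = 0 :=
        Nat.factorization_eq_zero_of_not_dvd (fun h => hmdvd r hr h)
      simp only [hfnu, hfmu, Finsupp.add_apply, h3, h4, Nat.zero_add, zero_add]
      rw [div_self, Real.log_one, mul_zero]
      have := Nat.Prime.factorization_pos_of_dvd (Nat.prime_of_mem_primeFactors hr) hu0
        (Nat.dvd_of_mem_primeFactors hr)
      positivity
    rw [h1, h2, add_zero]
  rw [hsum1, hsum2]
  -- the key inequality
  have hcastβε : ((β - ε : ℕ) : ℝ) = (β : ℝ) - (ε : ℕ) := by
    rw [Nat.cast_sub hε.le]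
  have hα' : (0 : ℝ) < α := by exact_mod_cast hα
  have hβ' : (0 : ℝ) < β := by exact_mod_cast hβ
  have hSle : S ≤ 0 := by
    have l1 : Real.log (((α + ε : ℕ) : ℝ) / (α : ℝ)) ≤ ((α + ε : ℕ) : ℝ) / (α : ℝ) - 1 :=
      Real.log_le_sub_one_of_pos (by positivity)
    have hβε : (0:ℝ) < ((β - ε : ℕ) : ℝ) := by
      have h9 : 0 < β - ε := by omega
      exact_mod_cast h9
    have l2 : Real.log (((β - ε : ℕ) : ℝ) / (β : ℝ)) ≤ ((β - ε : ℕ) : ℝ) / (β : ℝ) - 1 :=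
      Real.log_le_sub_one_of_pos (div_pos hβε hβ')
    have e1 : (α : ℝ) * Real.log (((α + ε : ℕ) : ℝ) / (α : ℝ)) ≤ (ε : ℝ) := by
      have := mul_le_mul_of_nonneg_left l1 hα'.le
      have heq : (α : ℝ) * (((α + ε : ℕ) : ℝ) / (α : ℝ) - 1) = ε := by
        push_cast; field_simp; ring
      linarith [heq ▸ this]
    have e2 : (β : ℝ) * Real.log (((β - ε : ℕ) : ℝ) / (β : ℝ)) ≤ -(ε : ℝ) := by
      have := mul_le_mul_of_nonneg_left l2 hβ'.le
      have heq : (β : ℝ) * (((β - ε : ℕ) : ℝ) / (β : ℝ) - 1) = -(ε : ℝ) := by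
        rw [hcastβε]; field_simp; ring
      linarith [heq ▸ this]
    rw [hS]; linarith
  have hA : (0 : ℝ) < ((α + β : ℕ) : ℝ) := by positivity
  have hA' : (0 : ℝ) < ((α + β + Ω u : ℕ) : ℝ) := by positivity
  have hAA' : ((α + β : ℕ) : ℝ) ≤ ((α + β + Ω u : ℕ) : ℝ) := by exact_mod_cast Nat.le_add_right _ _
  have hinv : 1 / ((α + β + Ω u : ℕ) : ℝ) ≤ 1 / ((α + β : ℕ) : ℝ) :=
    one_div_le_one_div_of_le hA hAA'
  have := mul_le_mul_of_nonpos_right hinv hSle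
  linarith
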